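/- The Fibonacci group F(2,4) = ⟨a₁, a₂, a₃, a₄ | a₁a₂ = a₃, a₂a₃ = a₄, a₃a₄ = a₁, a₄a₁ = a₂⟩ is isomorphic to the cyclic group of order 5. -/

import Mathlib

/-- Relations of the Fibonacci group F(2,n): aᵢ a_{i+1} = a_{i+2}, indices mod n. -/
def fibRels (n : ℕ) [NeZero n] : Set (FreeGroup (Fin n)) :=
  {r | ∃ i : Fin n, r = FreeGroup.of i * FreeGroup.of (i + 1) * (FreeGroup.of (i + 2))⁻¹}

/-- The Fibonacci group F(2,n). -/
abbrev Fib (n : ℕ) [NeZero n] := PresentedGroup (fibRels n)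

namespace FibAux

local notation "g" => (PresentedGroup.of (rels := fibRels 4) : Fin 4 → Fib 4)

lemma rel (i : Fin 4) : g i * g (i + 1) = g (i + 2) := by
  have h : (PresentedGroup.mk (fibRels 4))
      (FreeGroup.of i * FreeGroup.of (i + 1) * (FreeGroup.of (i + 2))⁻¹) = 1 := by
    have : (FreeGroup.of i * FreeGroup.of (i + 1) * (FreeGroup.of (i + 2))⁻¹)
        ∈ Subgroup.normalClosure (fibRels 4) :=
      Subgroup.subset_normalClosure ⟨i, rfl⟩
    exact (QuotientGroup.eq_one_iff _).2 this
  simp only [map_mul, map_inv] at h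
  exact mul_inv_eq_one.mp h

lemma r0 : g 0 * g 1 = g 2 := rel 0
lemma r1 : g 1 * g 2 = g 3 := rel 1
lemma r2 : g 2 * g 3 = g 0 := by
  simpa only [show (2 + 1 : Fin 4) = 3 by decide, show (2 + 2 : Fin 4) = 0 by decide] using rel 2
lemma r3 : g 3 * g 0 = g 1 := by
  simpa only [show (3 + 1 : Fin 4) = 0 by decide, show (3 + 2 : Fin 4) = 1 by decide] using rel 3

lemma key1 : g 0 * g 1 * g 0 = 1 := by
  apply mul_left_cancel (a := g 1)
  rw [mul_one, ← mul_assoc, r0, r1, r3]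

lemma hg1 : g 1 = (g 0)⁻¹ * (g 0)⁻¹ := by
  have h1 : g 0 * g 1 = (g 0)⁻¹ := mul_eq_one_iff_eq_inv.mp key1
  have := congrArg ((g 0)⁻¹ * ·) h1
  simpa using this

lemma e2 : g 2 = g 0 * g 1 := r0.symm
lemma e3 : g 3 = g 1 * (g 0 * g 1) := by rw [← r1, e2]

lemma hord : g 0 ^ 5 = 1 := by
  have h5 : g 0 * g 1 * (g 1 * (g 0 * g 1)) = g 0 := by rw [← e3, ← e2]; exact r2
  rw [hg1] at h5
  have h4 : ((g 0)⁻¹) ^ 4 = g 0 := by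
    calc ((g 0)⁻¹) ^ 4
        = g 0 * ((g 0)⁻¹ * (g 0)⁻¹) *
          ((g 0)⁻¹ * (g 0)⁻¹ * (g 0 * ((g 0)⁻¹ * (g 0)⁻¹))) := by group
      _ = g 0 := h5
  have h4' : g 0 ^ 4 = (g 0)⁻¹ := by
    have := congrArg Inv.inv h4
    simpa [inv_pow] using this
  rw [pow_succ, h4', inv_mul_cancel]

lemma hg1' : g 1 = g 0 ^ 3 := by
  have h : (g 0)⁻¹ * (g 0)⁻¹ * g 0 ^ 5 = g 0 ^ 3 := by group
  rw [hg1, ← h, hord, mul_one]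

lemma e2' : g 2 = g 0 ^ 4 := by rw [e2, hg1']; group

lemma e3' : g 3 = g 0 ^ 2 := by
  have h7 : g 0 ^ 7 = g 0 ^ 2 := by
    rw [show (7 : ℕ) = 2 + 5 from rfl, pow_add, hord, mul_one]
  rw [e3, hg1', ← h7]; group

/-- The generator images in ZMod 5. -/
def v : Fin 4 → ZMod 5 := ![1, 3, 4, 2]

lemma lift_cond : ∀ r ∈ fibRels 4,
    FreeGroup.lift (fun i => Multiplicative.ofAdd (v i)) r = 1 := by
  rintro r ⟨i, rfl⟩
  fin_cases i <;> simp [v] <;> decide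

/-- Forward homomorphism. -/
def φ : Fib 4 →* Multiplicative (ZMod 5) := PresentedGroup.toGroup lift_cond

lemma φ_of (i : Fin 4) : φ (g i) = Multiplicative.ofAdd (v i) :=
  PresentedGroup.toGroup.of lift_cond

/-- Integer-indexed powers of a₀, additively. -/
def fadd : ℤ →+ Additive (Fib 4) := zmultiplesHom (Additive (Fib 4)) (Additive.ofMul (g 0))

lemma fadd_cond : fadd (5 : ℕ) = 0 := by
  show (5 : ℤ) • Additive.ofMul (g 0) = 0
  have h : g 0 ^ (5 : ℤ) = 1 := by rw [show (5:ℤ) = (5:ℕ) from rfl, zpow_natCast, hord]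
  simpa [← ofMul_zpow] using congrArg Additive.ofMul h

/-- Backward homomorphism. -/
def ψ : Multiplicative (ZMod 5) →* Fib 4 where
  toFun x := Additive.toMul (ZMod.lift 5 ⟨fadd, fadd_cond⟩ x.toAdd)
  map_one' := by simp
  map_mul' x y := by simp [← toMul_add]

lemma ψ_int (z : ℤ) : ψ (Multiplicative.ofAdd ((z : ZMod 5))) = g 0 ^ z := by
  show Additive.toMul (ZMod.lift 5 ⟨fadd, fadd_cond⟩ ((z : ZMod 5))) = g 0 ^ z
  rw [ZMod.lift_coe]
  show Additive.toMul (z • Additive.ofMul (g 0)) = g 0 ^ z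
  simp [← ofMul_zpow]

lemma ψ_nat (n : ℕ) : ψ (Multiplicative.ofAdd ((n : ZMod 5))) = g 0 ^ n := by
  have := ψ_int n
  simpa [zpow_natCast] using this

theorem comp1 : ψ.comp φ = MonoidHom.id (Fib 4) := by
  apply PresentedGroup.ext
  intro x
  simp only [MonoidHom.comp_apply, MonoidHom.id_apply, φ_of]
  fin_cases x
  · show ψ (Multiplicative.ofAdd (v 0)) = g 0
    rw [show v 0 = ((1:ℕ) : ZMod 5) by decide, ψ_nat, pow_one]
  · show ψ (Multiplicative.ofAdd (v 1)) = g 1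
    rw [show v 1 = ((3:ℕ) : ZMod 5) by decide, ψ_nat, hg1']
  · show ψ (Multiplicative.ofAdd (v 2)) = g 2
    rw [show v 2 = ((4:ℕ) : ZMod 5) by decide, ψ_nat, e2']
  · show ψ (Multiplicative.ofAdd (v 3)) = g 3
    rw [show v 3 = ((2:ℕ) : ZMod 5) by decide, ψ_nat, e3']

theorem comp2 : φ.comp ψ = MonoidHom.id (Multiplicative (ZMod 5)) := by
  refine MonoidHom.ext fun x => ?_
  have hx : x = Multiplicative.ofAdd (((x.toAdd.val : ℕ) : ZMod 5)) := by
    simp [ZMod.natCast_val, ZMod.cast_id']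
  rw [MonoidHom.comp_apply, MonoidHom.id_apply, hx, ψ_nat, map_pow, φ_of]
  rw [show v 0 = 1 by decide, ← ofAdd_nsmul]
  simp [ZMod.natCast_val, ZMod.cast_id']

end FibAux

/-- F(2,4) is isomorphic to the cyclic group of order 5. -/
theorem fib4_iso_cyclic5 : Nonempty (Fib 4 ≃* Multiplicative (ZMod 5)) :=
  ⟨MonoidHom.toMulEquiv FibAux.φ FibAux.ψ FibAux.comp1 FibAux.comp2⟩
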